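/- Let Γ be a profinite group, ℓ a prime, and ρ : Γ → GLₙ(ℚ̄_ℓ) a continuous representation (with the ℓ-adic topology on ℚ̄_ℓ). Then tr ρ takes values in the ring of integers ℤ̄_ℓ of ℚ̄_ℓ. -/

import Mathlib

private lemma aux_eigenvector {Ω : Type*} [Field Ω] {n : ℕ}
    (M : Matrix (Fin n) (Fin n) Ω) (lam : Ω)
    (h : M.charpoly.IsRoot lam) : ∃ v ≠ 0, M.mulVec v = lam • v := by
  have hdet : (lam • (1 : Matrix (Fin n) (Fin n) Ω) - M).det = 0 := by
    have : (Matrix.charmatrix M).map (Polynomial.evalRingHom lam) =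
        lam • (1 : Matrix (Fin n) (Fin n) Ω) - M := by
      ext i j
      by_cases hij : i = j <;>
        simp [Matrix.charmatrix_apply, Matrix.diagonal_apply, hij, Matrix.one_apply]
    rw [← this, ← RingHom.mapMatrix_apply, ← RingHom.map_det]
    simpa [Matrix.charpoly] using h
  obtain ⟨v, hv0, hv⟩ := (Matrix.exists_mulVec_eq_zero_iff).2 hdet
  refine ⟨v, hv0, ?_⟩
  rw [Matrix.sub_mulVec, Matrix.smul_mulVec, Matrix.one_mulVec, sub_eq_zero] at hv
  exact hv.symm

private lemma aux_multiset_sum {Ω : Type*} [NormedField Ω]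
    (hna : IsNonarchimedean fun x : Ω => ‖x‖) (s : Multiset Ω)
    (h : ∀ x ∈ s, ‖x‖ ≤ 1) : ‖s.sum‖ ≤ 1 := by
  induction s using Multiset.induction with
  | empty => simp
  | cons a s ih =>
    rw [Multiset.sum_cons]
    refine (hna a s.sum).trans (max_le (h a (Multiset.mem_cons_self a s)) ?_)
    exact ih fun x hx => h x (Multiset.mem_cons_of_mem hx)

/-- a continuous representation `ρ : Γ → GLₙ(ℚ̄_ℓ)` of a profinite group has
traces in the valuation ring `ℤ̄_ℓ`, i.e. `‖tr ρ(γ)‖ ≤ 1` for all `γ`.  Here `ℚ̄_ℓ` is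
modelled by an algebraically closed nonarchimedean normed field `Ω` whose norm extends the
`ℓ`-adic norm on `ℚ_ℓ`, and `ℤ̄_ℓ = {x : ‖x‖ ≤ 1}` is its valuation ring. -/
theorem stmt5 {Γ : Type*} [Group Γ] [TopologicalSpace Γ] [IsTopologicalGroup Γ]
    [CompactSpace Γ] [TotallyDisconnectedSpace Γ]
    (ℓ : ℕ) [Fact ℓ.Prime] {Ω : Type*} [NormedField Ω] [IsAlgClosed Ω] [Algebra ℚ_[ℓ] Ω]
    (hext : ∀ x : ℚ_[ℓ], ‖algebraMap ℚ_[ℓ] Ω x‖ = ‖x‖)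
    (hna : IsNonarchimedean fun x : Ω => ‖x‖)
    {n : ℕ} (ρ : Γ →* GL (Fin n) Ω)
    (hcont : Continuous fun γ : Γ => (ρ γ : Matrix (Fin n) (Fin n) Ω)) :
    ∀ γ : Γ, ‖Matrix.trace (ρ γ : Matrix (Fin n) (Fin n) Ω)‖ ≤ 1 := by
  -- a uniform bound on row sums of all matrices in the image
  set F : Γ → ℝ := fun g => ∑ i : Fin n, ∑ j : Fin n, ‖(ρ g : Matrix (Fin n) (Fin n) Ω) i j‖
    with hF
  have hFcont : Continuous F := by
    refine continuous_finset_sum _ fun i _ => continuous_finset_sum _ fun j _ => ?_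
    exact ((continuous_apply j).comp ((continuous_apply i).comp hcont)).norm
  obtain ⟨C, hC⟩ : ∃ C, ∀ g, F g ≤ C := by
    obtain ⟨C, hC⟩ := (isCompact_range hFcont).bddAbove
    exact ⟨C, fun g => hC ⟨g, rfl⟩⟩
  have hrow : ∀ (g : Γ) (i : Fin n),
      ∑ j : Fin n, ‖(ρ g : Matrix (Fin n) (Fin n) Ω) i j‖ ≤ C := by
    intro g i
    refine le_trans ?_ (hC g)
    exact Finset.single_le_sum (f := fun i => ∑ j : Fin n, ‖(ρ g : Matrix (Fin n) (Fin n) Ω) i j‖)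
      (fun i _ => Finset.sum_nonneg fun j _ => norm_nonneg _) (Finset.mem_univ i)
  intro γ
  set A : Matrix (Fin n) (Fin n) Ω := (ρ γ : Matrix (Fin n) (Fin n) Ω) with hA
  rw [Matrix.trace_eq_sum_roots_charpoly]
  refine aux_multiset_sum hna _ fun lam hlam => ?_
  have hroot : A.charpoly.IsRoot lam :=
    (Polynomial.isRoot_of_mem_roots hlam)
  obtain ⟨v, hv0, hv⟩ := aux_eigenvector A lam hroot
  -- pick index with maximal |v i|
  obtain ⟨j0, hj0⟩ : ∃ j, v j ≠ 0 := by
    by_contra h; push_neg at h; exact hv0 (funext h)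
  obtain ⟨i0, -, hi0⟩ := Finset.exists_max_image (Finset.univ : Finset (Fin n))
    (fun i => ‖v i‖) ⟨j0, Finset.mem_univ j0⟩
  have hvi0 : 0 < ‖v i0‖ := lt_of_lt_of_le (norm_pos_iff.2 hj0) (hi0 j0 (Finset.mem_univ j0))
  -- powers
  have hpow : ∀ k : ℕ, (A ^ k).mulVec v = lam ^ k • v := by
    intro k
    induction k with
    | zero => simp [Matrix.one_mulVec]
    | succ k ih =>
      rw [pow_succ, ← Matrix.mulVec_mulVec, hv, Matrix.mulVec_smul, ih, pow_succ]
      rw [smul_smul, mul_comm]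
  have hAk : ∀ k : ℕ, (A ^ k) = ((ρ (γ ^ k) : Matrix (Fin n) (Fin n) Ω)) := by
    intro k
    rw [map_pow, hA]
    rfl
  have hbound : ∀ k : ℕ, ‖lam‖ ^ k ≤ C := by
    intro k
    have h1 : ‖lam‖ ^ k * ‖v i0‖ = ‖((A ^ k).mulVec v) i0‖ := by
      rw [hpow k, Pi.smul_apply, smul_eq_mul, norm_mul, norm_pow]
    have h2 : ‖((A ^ k).mulVec v) i0‖ ≤ C * ‖v i0‖ := by
      rw [Matrix.mulVec, dotProduct]
      calc ‖∑ j : Fin n, (A ^ k) i0 j * v j‖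
          ≤ ∑ j : Fin n, ‖(A ^ k) i0 j * v j‖ := norm_sum_le _ _
        _ ≤ ∑ j : Fin n, ‖(A ^ k) i0 j‖ * ‖v i0‖ := by
            refine Finset.sum_le_sum fun j _ => ?_
            rw [norm_mul]
            exact mul_le_mul_of_nonneg_left (hi0 j (Finset.mem_univ j)) (norm_nonneg _)
        _ = (∑ j : Fin n, ‖(A ^ k) i0 j‖) * ‖v i0‖ := by rw [Finset.sum_mul]
        _ ≤ C * ‖v i0‖ := by
            refine mul_le_mul_of_nonneg_right ?_ (norm_nonneg _)
            rw [hAk k]; exact hrow (γ ^ k) i0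
    have := h1.trans_le h2
    exact le_of_mul_le_mul_right this hvi0
  by_contra hgt
  push_neg at hgt
  obtain ⟨k, hk⟩ := pow_unbounded_of_one_lt C hgt
  exact absurd (hbound k) (not_le.2 hk)
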